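/- With φ_ω as the spherical function on Hilbert–Schmidt operators, write φ_ω(ξ) = 1 − ‖ω‖ tr(ξ²) + R(ω, ξ). Then for every fixed Hilbert–Schmidt operator ξ, R(ω, ξ)/‖ω‖ → 0 as ‖ω‖ → 0. Moreover, for every ρ > 0 there exist constants C > 0 and ε > 0 such that ‖ω‖ ≤ ε and ‖ξ‖_{HS} ≤ ρ imply |1 − φ_ω(ξ)| ≤ C‖ω‖. -/

import Mathlib

/-- Product of two infinite matrices (entries of operators on ℓ²(ℕ)). -/
noncomputable def matMul (A B : ℕ → ℕ → ℂ) : ℕ → ℕ → ℂ := fun i j => ∑' k, A i k * B k j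

/-- Powers of an infinite matrix. -/
noncomputable def matPow (A : ℕ → ℕ → ℂ) : ℕ → ℕ → ℕ → ℂ
  | 0 => fun i j => if i = j then 1 else 0
  | n + 1 => matMul (matPow A n) A

/-- The Hilbert–Schmidt norm ‖A‖_HS = (∑_{i,j} |A_{ij}|²)^{1/2}. -/
noncomputable def hsNorm (A : ℕ → ℕ → ℂ) : ℝ := Real.sqrt (∑' p : ℕ × ℕ, ‖A p.1 p.2‖ ^ 2)

/-- The trace of an infinite matrix. -/
noncomputable def traceM (A : ℕ → ℕ → ℂ) : ℂ := ∑' i, A i i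

/-- An infinite matrix is Hilbert–Schmidt if its entries are square-summable. -/
def IsHS (A : ℕ → ℕ → ℂ) : Prop := Summable fun p : ℕ × ℕ => ‖A p.1 p.2‖ ^ 2

/-- Fredholm determinant det(1+A) via exp(tr(log(1+A))). -/
noncomputable def det1Add (A : ℕ → ℕ → ℂ) : ℂ :=
  Complex.exp (∑' m : ℕ, ((-1 : ℂ) ^ m / (m + 1)) * traceM (matPow A (m + 1)))

/-- The factor det(1 + α_k ξ²)⁻¹ of the spherical function. -/
noncomputable def detFactor (a : ℝ) (ξ : ℕ → ℕ → ℂ) : ℂ :=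
  (det1Add fun i j => (a : ℂ) * matPow ξ 2 i j)⁻¹

/-- The spherical function φ_ω(ξ) = e^{−γ tr ξ²} ∏_k det(1 + α_k ξ²)⁻¹. -/
noncomputable def sphFun (α : ℕ → ℝ) (γ : ℝ) (ξ : ℕ → ℕ → ℂ) : ℂ :=
  Complex.exp (-(γ : ℂ) * traceM (matPow ξ 2)) * ∏' k, detFactor (α k) ξ

/-- ‖ω‖ = γ + ∑_k α_k. -/
noncomputable def omegaNorm (α : ℕ → ℝ) (γ : ℝ) : ℝ := γ + ∑' k, α k

/-- The remainder R(ω, ξ) in the expansion φ_ω(ξ) = 1 − ‖ω‖ tr ξ² + R(ω, ξ). -/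
noncomputable def remR (α : ℕ → ℝ) (γ : ℝ) (ξ : ℕ → ℕ → ℂ) : ℂ :=
  sphFun α γ ξ - 1 + (omegaNorm α γ : ℂ) * traceM (matPow ξ 2)

noncomputable def Sval (A : ℕ → ℕ → ℂ) : ℝ := ∑' p : ℕ × ℕ, ‖A p.1 p.2‖ ^ 2

lemma Sval_nonneg (A : ℕ → ℕ → ℂ) : 0 ≤ Sval A := tsum_nonneg (fun _ => sq_nonneg _)

lemma cs_tsum {ι : Type*} {f g : ι → ℝ} (hf0 : ∀ i, 0 ≤ f i) (hg0 : ∀ i, 0 ≤ g i)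
    (hf : Summable (fun i => f i ^ 2)) (hg : Summable (fun i => g i ^ 2)) :
    Summable (fun i => f i * g i) ∧
      ∑' i, f i * g i ≤ Real.sqrt ((∑' i, f i ^ 2) * ∑' i, g i ^ 2) := by
  have key : ∀ s : Finset ι, ∑ i ∈ s, f i * g i ≤
      Real.sqrt ((∑' i, f i ^ 2) * ∑' i, g i ^ 2) := by
    intro s
    have h1 : (∑ i ∈ s, f i * g i) ^ 2 ≤ (∑ i ∈ s, f i ^ 2) * ∑ i ∈ s, g i ^ 2 :=
      Finset.sum_mul_sq_le_sq_mul_sq s f g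
    have h2 : (∑ i ∈ s, f i ^ 2) * ∑ i ∈ s, g i ^ 2 ≤ (∑' i, f i ^ 2) * ∑' i, g i ^ 2 :=
      mul_le_mul (Summable.sum_le_tsum s (fun i _ => sq_nonneg _) hf)
        (Summable.sum_le_tsum s (fun i _ => sq_nonneg _) hg)
        (Finset.sum_nonneg fun i _ => sq_nonneg _) (tsum_nonneg fun _ => sq_nonneg _)
    have h3 : 0 ≤ ∑ i ∈ s, f i * g i := Finset.sum_nonneg fun i _ => mul_nonneg (hf0 i) (hg0 i)
    calc ∑ i ∈ s, f i * g i = Real.sqrt ((∑ i ∈ s, f i * g i) ^ 2) := (Real.sqrt_sq h3).symm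
      _ ≤ _ := Real.sqrt_le_sqrt (h1.trans h2)
  have hsum := summable_of_sum_le (fun i => mul_nonneg (hf0 i) (hg0 i)) key
  exact ⟨hsum, Summable.tsum_le_of_sum_le hsum key⟩

-- transpose summability
lemma isHS_swap {B : ℕ → ℕ → ℂ} (hB : IsHS B) :
    Summable (fun p : ℕ × ℕ => ‖B p.2 p.1‖ ^ 2) := by
  have h := Summable.comp_injective (i := fun p : ℕ × ℕ => (p.2, p.1)) hB
    (fun p q h => by
      simp only [Prod.mk.injEq] at h
      exact Prod.ext h.2 h.1)
  simpa [Function.comp_def] using h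

lemma Sval_swap (B : ℕ → ℕ → ℂ) :
    ∑' p : ℕ × ℕ, ‖B p.2 p.1‖ ^ 2 = Sval B := by
  have h := (Equiv.prodComm ℕ ℕ).tsum_eq (fun p : ℕ × ℕ => ‖B p.1 p.2‖ ^ 2)
  simpa [Sval, Equiv.prodComm] using h

lemma row_summable {A : ℕ → ℕ → ℂ} (hA : IsHS A) (i : ℕ) :
    Summable (fun k => ‖A i k‖ ^ 2) := hA.prod_factor i

lemma col_summable {B : ℕ → ℕ → ℂ} (hB : IsHS B) (j : ℕ) :
    Summable (fun k => ‖B k j‖ ^ 2) := (isHS_swap hB).prod_factor j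

lemma matMul_entry_bound {A B : ℕ → ℕ → ℂ} (hA : IsHS A) (hB : IsHS B) (i j : ℕ) :
    Summable (fun k => ‖A i k‖ * ‖B k j‖) ∧
      ‖matMul A B i j‖ ^ 2 ≤ (∑' k, ‖A i k‖ ^ 2) * ∑' k, ‖B k j‖ ^ 2 := by
  obtain ⟨hs, hle⟩ := cs_tsum (f := fun k => ‖A i k‖) (g := fun k => ‖B k j‖)
    (fun _ => norm_nonneg _) (fun _ => norm_nonneg _) (row_summable hA i) (col_summable hB j)
  refine ⟨hs, ?_⟩
  have h1 : ‖matMul A B i j‖ ≤ ∑' k, ‖A i k‖ * ‖B k j‖ := by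
    have := norm_tsum_le_tsum_norm (f := fun k => A i k * B k j) (by simpa [norm_mul] using hs)
    simpa [matMul, norm_mul] using this
  have h2 : ‖matMul A B i j‖ ≤ Real.sqrt ((∑' k, ‖A i k‖ ^ 2) * ∑' k, ‖B k j‖ ^ 2) :=
    h1.trans hle
  have h3 := pow_le_pow_left₀ (norm_nonneg _) h2 2
  rwa [Real.sq_sqrt (mul_nonneg (tsum_nonneg fun _ => sq_nonneg _)
    (tsum_nonneg fun _ => sq_nonneg _))] at h3

lemma isHS_matMul {A B : ℕ → ℕ → ℂ} (hA : IsHS A) (hB : IsHS B) :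
    IsHS (matMul A B) ∧ Sval (matMul A B) ≤ Sval A * Sval B := by
  set u : ℕ → ℝ := fun i => ∑' k, ‖A i k‖ ^ 2 with hu
  set v : ℕ → ℝ := fun j => ∑' k, ‖B k j‖ ^ 2 with hv
  have hus : Summable u := hA.prod
  have hvs : Summable v := (isHS_swap hB).prod
  have hu0 : ∀ i, 0 ≤ u i := fun i => tsum_nonneg fun _ => sq_nonneg _
  have hv0 : ∀ j, 0 ≤ v j := fun j => tsum_nonneg fun _ => sq_nonneg _
  have hprod : Summable (fun p : ℕ × ℕ => u p.1 * v p.2) :=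
    hus.mul_of_nonneg hvs hu0 hv0
  have hbound : ∀ p : ℕ × ℕ, ‖matMul A B p.1 p.2‖ ^ 2 ≤ u p.1 * v p.2 :=
    fun p => (matMul_entry_bound hA hB p.1 p.2).2
  have hHS : IsHS (matMul A B) :=
    Summable.of_nonneg_of_le (fun _ => sq_nonneg _) hbound hprod
  refine ⟨hHS, ?_⟩
  have h1 : Sval (matMul A B) ≤ ∑' p : ℕ × ℕ, u p.1 * v p.2 :=
    Summable.tsum_le_tsum hbound hHS hprod
  have h2 : ∑' p : ℕ × ℕ, u p.1 * v p.2 = (∑' i, u i) * ∑' j, v j := by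
    rw [Summable.tsum_prod' hprod (fun b => (hvs.mul_left (u b)))]
    simp_rw [tsum_mul_left]
    rw [tsum_mul_right]
  have h3 : (∑' i, u i) = Sval A := (Summable.tsum_prod' hA (fun b => row_summable hA b)).symm
  have h4 : (∑' j, v j) = Sval B := by
    rw [← Sval_swap B, Summable.tsum_prod' (isHS_swap hB) (fun b => col_summable hB b)]
  rw [h2, h3, h4] at h1
  exact h1

lemma trace_matMul_bound {A B : ℕ → ℕ → ℂ} (hA : IsHS A) (hB : IsHS B) :
    ‖traceM (matMul A B)‖ ≤ Real.sqrt (Sval A * Sval B) := by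
  obtain ⟨hFs, hFle⟩ := cs_tsum (f := fun p : ℕ × ℕ => ‖A p.1 p.2‖)
    (g := fun p : ℕ × ℕ => ‖B p.2 p.1‖) (fun _ => norm_nonneg _) (fun _ => norm_nonneg _)
    hA (isHS_swap hB)
  rw [Sval_swap B] at hFle
  set F : ℕ × ℕ → ℝ := fun p => ‖A p.1 p.2‖ * ‖B p.2 p.1‖ with hF
  have hFi : ∀ i, Summable (fun k => F (i, k)) := fun i => hFs.prod_factor i
  have hnorm : ∀ i, ‖matMul A B i i‖ ≤ ∑' k, F (i, k) := by
    intro i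
    have := norm_tsum_le_tsum_norm (f := fun k => A i k * B k i)
      (by simpa [hF, norm_mul] using hFi i)
    simpa [matMul, hF, norm_mul] using this
  have hsum2 : Summable (fun i => ∑' k, F (i, k)) := hFs.prod
  have hnsum : Summable (fun i => ‖matMul A B i i‖) :=
    Summable.of_nonneg_of_le (fun _ => norm_nonneg _) hnorm hsum2
  have h1 : ‖traceM (matMul A B)‖ ≤ ∑' i, ‖matMul A B i i‖ :=
    norm_tsum_le_tsum_norm hnsum
  have h2 : ∑' i, ‖matMul A B i i‖ ≤ ∑' i, ∑' k, F (i, k) :=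
    Summable.tsum_le_tsum hnorm hnsum hsum2
  have h3 : ∑' i, ∑' k, F (i, k) = ∑' p : ℕ × ℕ, F p := (Summable.tsum_prod' hFs hFi).symm
  calc ‖traceM (matMul A B)‖ ≤ ∑' i, ∑' k, F (i, k) := h1.trans h2
    _ = ∑' p : ℕ × ℕ, F p := h3
    _ ≤ _ := hFle

lemma matPow_one (A : ℕ → ℕ → ℂ) : matPow A 1 = A := by
  funext i j
  show ∑' k, (if i = k then (1 : ℂ) else 0) * A k j = A i j
  rw [tsum_eq_single i]
  · simp
  · intro b hb
    simp [Ne.symm hb]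

lemma isHS_matPow {ξ : ℕ → ℕ → ℂ} (hξ : IsHS ξ) :
    ∀ n, IsHS (matPow ξ (n + 1)) ∧ Sval (matPow ξ (n + 1)) ≤ Sval ξ ^ (n + 1) := by
  intro n
  induction n with
  | zero => rw [matPow_one]; exact ⟨hξ, by simp⟩
  | succ m ih =>
    have h := isHS_matMul ih.1 hξ
    refine ⟨h.1, h.2.trans ?_⟩
    calc Sval (matPow ξ (m + 1)) * Sval ξ ≤ Sval ξ ^ (m + 1) * Sval ξ :=
          mul_le_mul_of_nonneg_right ih.2 (Sval_nonneg ξ)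
      _ = Sval ξ ^ (m + 2) := by ring

lemma matPow_smul (c : ℂ) (A : ℕ → ℕ → ℂ) :
    ∀ n, matPow (fun i j => c * A i j) n = fun i j => c ^ n * matPow A n i j := by
  intro n
  induction n with
  | zero => funext i j; simp [matPow]
  | succ m ih =>
    funext i j
    show matMul (matPow (fun i j => c * A i j) m) (fun i j => c * A i j) i j = _
    rw [ih]
    show ∑' k, (c ^ m * matPow A m i k) * (c * A k j) = c ^ (m + 1) * matMul (matPow A m) A i j
    have : ∀ k : ℕ, (c ^ m * matPow A m i k) * (c * A k j)
        = c ^ (m + 1) * (matPow A m i k * A k j) := by intro k; ring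
    rw [tsum_congr this, tsum_mul_left]
    rfl

lemma traceM_smul (c : ℂ) (A : ℕ → ℕ → ℂ) :
    traceM (fun i j => c * A i j) = c * traceM A := by
  simp [traceM, tsum_mul_left]

/-- unconditional formula for detFactor -/
lemma detFactor_eq (a : ℝ) (ξ : ℕ → ℕ → ℂ) :
    detFactor a ξ = Complex.exp
      (-(∑' m : ℕ, ((-1 : ℂ) ^ m / (m + 1)) *
          ((a : ℂ) ^ (m + 1) * traceM (matPow (matPow ξ 2) (m + 1))))) := by
  unfold detFactor det1Add
  rw [← Complex.exp_neg]
  congr 2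
  apply tsum_congr
  intro m
  rw [matPow_smul (a : ℂ) (matPow ξ 2) (m + 1)]
  rw [traceM_smul]

/-- trace power bound: ‖tr((ξ²)^(m+1))‖ ≤ (Sval ξ)^(m+1) -/
lemma trace_pow_bound {ξ : ℕ → ℕ → ℂ} (hξ : IsHS ξ) (m : ℕ) :
    ‖traceM (matPow (matPow ξ 2) (m + 1))‖ ≤ Sval ξ ^ (m + 1) := by
  have hB2 : matPow ξ 2 = matMul ξ ξ := by
    show matMul (matPow ξ 1) ξ = matMul ξ ξ
    rw [matPow_one]
  have hR : (0 : ℝ) ≤ Sval ξ := Sval_nonneg ξ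
  have hBHS : IsHS (matPow ξ 2) := by rw [hB2]; exact (isHS_matMul hξ hξ).1
  have hBS : Sval (matPow ξ 2) ≤ Sval ξ ^ 2 := by
    rw [hB2]; simpa [sq] using (isHS_matMul hξ hξ).2
  cases m with
  | zero =>
    rw [matPow_one, hB2]
    calc ‖traceM (matMul ξ ξ)‖ ≤ Real.sqrt (Sval ξ * Sval ξ) := trace_matMul_bound hξ hξ
      _ = Sval ξ := Real.sqrt_mul_self hR
      _ = Sval ξ ^ 1 := (pow_one _).symm
  | succ n =>
    have hP := isHS_matPow hBHS n
    have h1 : ‖traceM (matMul (matPow (matPow ξ 2) (n + 1)) (matPow ξ 2))‖ ≤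
        Real.sqrt (Sval (matPow (matPow ξ 2) (n + 1)) * Sval (matPow ξ 2)) :=
      trace_matMul_bound hP.1 hBHS
    have h2 : Sval (matPow (matPow ξ 2) (n + 1)) * Sval (matPow ξ 2) ≤ (Sval ξ ^ (n + 2)) ^ 2 := by
      have hb : Sval (matPow (matPow ξ 2) (n + 1)) ≤ (Sval ξ ^ 2) ^ (n + 1) :=
        hP.2.trans (pow_le_pow_left₀ (Sval_nonneg _) hBS (n + 1))
      calc Sval (matPow (matPow ξ 2) (n + 1)) * Sval (matPow ξ 2)
          ≤ (Sval ξ ^ 2) ^ (n + 1) * Sval ξ ^ 2 :=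
            mul_le_mul hb hBS (Sval_nonneg _) (by positivity)
        _ = (Sval ξ ^ (n + 2)) ^ 2 := by ring
    calc ‖traceM (matPow (matPow ξ 2) (n + 1 + 1))‖
        ≤ Real.sqrt (Sval (matPow (matPow ξ 2) (n + 1)) * Sval (matPow ξ 2)) := h1
      _ ≤ Real.sqrt ((Sval ξ ^ (n + 2)) ^ 2) := Real.sqrt_le_sqrt h2
      _ = Sval ξ ^ (n + 2) := Real.sqrt_sq (by positivity)

noncomputable def Gterm (ξ : ℕ → ℕ → ℂ) (a : ℝ) (m : ℕ) : ℂ :=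
  ((-1 : ℂ) ^ m / (m + 1)) * ((a : ℂ) ^ (m + 1) * traceM (matPow (matPow ξ 2) (m + 1)))

lemma Gterm_zero (ξ : ℕ → ℕ → ℂ) (a : ℝ) :
    Gterm ξ a 0 = (a : ℂ) * traceM (matPow ξ 2) := by
  simp [Gterm, matPow_one]

lemma Gterm_norm_le {ξ : ℕ → ℕ → ℂ} (hξ : IsHS ξ) {a : ℝ} (ha : 0 ≤ a) (m : ℕ) :
    ‖Gterm ξ a m‖ ≤ (a * Sval ξ) ^ (m + 1) := by
  have hR := Sval_nonneg ξ
  have hc : ‖((-1 : ℂ) ^ m / (m + 1))‖ ≤ 1 := by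
    rw [norm_div, norm_pow]
    simp only [norm_neg, norm_one, one_pow]
    rw [div_le_one]
    · have : ((m : ℂ) + 1) = ((m + 1 : ℕ) : ℂ) := by push_cast; ring
      rw [this, Complex.norm_natCast]
      exact_mod_cast Nat.one_le_iff_ne_zero.mpr (Nat.succ_ne_zero m)
    · have : ((m : ℂ) + 1) = ((m + 1 : ℕ) : ℂ) := by push_cast; ring
      rw [this, Complex.norm_natCast]
      positivity
  have h2 : ‖(a : ℂ) ^ (m + 1) * traceM (matPow (matPow ξ 2) (m + 1))‖
      ≤ a ^ (m + 1) * Sval ξ ^ (m + 1) := by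
    rw [norm_mul, norm_pow, Complex.norm_real, Real.norm_of_nonneg ha]
    exact mul_le_mul_of_nonneg_left (trace_pow_bound hξ m) (by positivity)
  calc ‖Gterm ξ a m‖ = ‖((-1 : ℂ) ^ m / (m + 1))‖ *
        ‖(a : ℂ) ^ (m + 1) * traceM (matPow (matPow ξ 2) (m + 1))‖ := norm_mul _ _
    _ ≤ 1 * (a ^ (m + 1) * Sval ξ ^ (m + 1)) := by
        exact mul_le_mul hc h2 (norm_nonneg _) one_pos.le
    _ = (a * Sval ξ) ^ (m + 1) := by rw [one_mul, mul_pow]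

lemma Gterm_summable {ξ : ℕ → ℕ → ℂ} (hξ : IsHS ξ) {a : ℝ} (ha : 0 ≤ a)
    (haR : a * Sval ξ ≤ 1 / 2) : Summable (Gterm ξ a) := by
  have hgeo : Summable (fun m : ℕ => ((1 : ℝ) / 2) ^ (m + 1)) := by
    simpa [pow_succ, mul_comm] using
      (summable_geometric_of_lt_one (by norm_num) (by norm_num :
        (1 : ℝ) / 2 < 1)).mul_left ((1 : ℝ) / 2)
  apply Summable.of_norm_bounded hgeo
  intro m
  exact (Gterm_norm_le hξ ha m).trans
    (pow_le_pow_left₀ (mul_nonneg ha (Sval_nonneg ξ)) haR (m + 1))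

lemma Gtail_bound {ξ : ℕ → ℕ → ℂ} (hξ : IsHS ξ) {a : ℝ} (ha : 0 ≤ a)
    (haR : a * Sval ξ ≤ 1 / 2) :
    Summable (fun m => Gterm ξ a (m + 1)) ∧
      ‖∑' m : ℕ, Gterm ξ a (m + 1)‖ ≤ 2 * Sval ξ ^ 2 * a ^ 2 := by
  have hR := Sval_nonneg ξ
  have haR0 : 0 ≤ a * Sval ξ := mul_nonneg ha hR
  have hbound : ∀ m : ℕ, ‖Gterm ξ a (m + 1)‖ ≤ (a * Sval ξ) ^ 2 * ((1 : ℝ) / 2) ^ m := by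
    intro m
    calc ‖Gterm ξ a (m + 1)‖ ≤ (a * Sval ξ) ^ (m + 2) := Gterm_norm_le hξ ha (m + 1)
      _ = (a * Sval ξ) ^ 2 * (a * Sval ξ) ^ m := by ring
      _ ≤ (a * Sval ξ) ^ 2 * ((1 : ℝ) / 2) ^ m :=
          mul_le_mul_of_nonneg_left (pow_le_pow_left₀ haR0 haR m) (by positivity)
  have hgeo : Summable (fun m : ℕ => (a * Sval ξ) ^ 2 * ((1 : ℝ) / 2) ^ m) :=
    (summable_geometric_of_lt_one (by norm_num) (by norm_num)).mul_left _
  have hsum : Summable (fun m => Gterm ξ a (m + 1)) :=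
    Summable.of_norm_bounded hgeo hbound
  refine ⟨hsum, ?_⟩
  have h1 : ‖∑' m : ℕ, Gterm ξ a (m + 1)‖ ≤ ∑' m : ℕ, ‖Gterm ξ a (m + 1)‖ :=
    norm_tsum_le_tsum_norm (hsum.norm)
  have h2 : ∑' m : ℕ, ‖Gterm ξ a (m + 1)‖ ≤ ∑' m : ℕ, (a * Sval ξ) ^ 2 * ((1 : ℝ) / 2) ^ m :=
    Summable.tsum_le_tsum hbound hsum.norm hgeo
  have h3 : ∑' m : ℕ, (a * Sval ξ) ^ 2 * ((1 : ℝ) / 2) ^ m = (a * Sval ξ) ^ 2 * 2 := by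
    rw [tsum_mul_left, tsum_geometric_two]
  calc ‖∑' m : ℕ, Gterm ξ a (m + 1)‖ ≤ (a * Sval ξ) ^ 2 * 2 := by
        rw [← h3]; exact h1.trans h2
    _ = 2 * Sval ξ ^ 2 * a ^ 2 := by ring

lemma Gsplit {ξ : ℕ → ℕ → ℂ} (hξ : IsHS ξ) {a : ℝ} (ha : 0 ≤ a)
    (haR : a * Sval ξ ≤ 1 / 2) :
    ∑' m : ℕ, Gterm ξ a m
      = (a : ℂ) * traceM (matPow ξ 2) + ∑' m : ℕ, Gterm ξ a (m + 1) := by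
  rw [Summable.tsum_eq_zero_add (Gterm_summable hξ ha haR), Gterm_zero]

lemma omegaNorm_nonneg {α : ℕ → ℝ} {γ : ℝ} (hα : ∀ k, 0 ≤ α k) (hγ : 0 ≤ γ) :
    0 ≤ omegaNorm α γ :=
  add_nonneg hγ (tsum_nonneg hα)

lemma main_est {ξ : ℕ → ℕ → ℂ} (hξ : IsHS ξ) (α : ℕ → ℝ) (γ : ℝ)
    (hα : ∀ k, 0 ≤ α k) (hsum : Summable α) (hγ : 0 ≤ γ)
    (hω : omegaNorm α γ ≤ 1 / (2 * (Sval ξ + 1))) :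
    ∃ H : ℂ,
      sphFun α γ ξ = Complex.exp (-(omegaNorm α γ : ℂ) * traceM (matPow ξ 2) - H) ∧
      ‖H‖ ≤ 2 * Sval ξ ^ 2 * omegaNorm α γ ^ 2 ∧
      ‖-(omegaNorm α γ : ℂ) * traceM (matPow ξ 2) - H‖ ≤ 2 * Sval ξ * omegaNorm α γ ∧
      2 * Sval ξ * omegaNorm α γ ≤ 1 := by
  set R := Sval ξ with hRdef
  have hR : 0 ≤ R := Sval_nonneg ξ
  set ω := omegaNorm α γ with hωdef
  have hω0 : 0 ≤ ω := omegaNorm_nonneg hα hγ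
  have hωR : ω * (2 * (R + 1)) ≤ 1 := by
    rw [← le_div_iff₀ (by positivity)]; exact hω
  have hαle : ∀ k, α k ≤ ω := by
    intro k
    have h1 : α k ≤ ∑' j, α j := Summable.le_tsum hsum k (fun j _ => hα j)
    have : 0 ≤ γ := hγ
    simp only [hωdef, omegaNorm]; linarith
  have hk : ∀ k, α k * R ≤ 1 / 2 := by
    intro k
    have h1 : α k * R ≤ ω * R := mul_le_mul_of_nonneg_right (hαle k) hR
    nlinarith
  set T1 := traceM (matPow ξ 2) with hT1
  have hT1R : ‖T1‖ ≤ R := by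
    have := trace_pow_bound hξ 0
    rwa [matPow_one, pow_one] at this
  set Gtail : ℕ → ℂ := fun k => ∑' m : ℕ, Gterm ξ (α k) (m + 1) with hGtail
  have hb : ∀ k, ‖Gtail k‖ ≤ 2 * R ^ 2 * α k ^ 2 :=
    fun k => (Gtail_bound hξ (hα k) (hk k)).2
  have hsumsq : Summable (fun k => α k ^ 2) := by
    apply Summable.of_nonneg_of_le (fun k => sq_nonneg _) (fun k => ?_) (hsum.mul_left ω)
    nlinarith [hαle k, hα k]
  have hsumb : Summable (fun k => 2 * R ^ 2 * α k ^ 2) := hsumsq.mul_left _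
  have hHs : Summable Gtail := Summable.of_norm_bounded hsumb hb
  set H := ∑' k, Gtail k with hHdef
  have hHnorm : ‖H‖ ≤ 2 * R ^ 2 * ω ^ 2 := by
    have h1 : ‖H‖ ≤ ∑' k, ‖Gtail k‖ := norm_tsum_le_tsum_norm hHs.norm
    have h2 : ∑' k, ‖Gtail k‖ ≤ ∑' k, 2 * R ^ 2 * α k ^ 2 := Summable.tsum_le_tsum hb hHs.norm hsumb
    have h3 : ∑' k, α k ^ 2 ≤ ω * ∑' k, α k := by
      rw [← tsum_mul_left]
      apply Summable.tsum_le_tsum (fun k => ?_) hsumsq (hsum.mul_left ω)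
      nlinarith [hαle k, hα k]
    have h4 : ∑' k, α k ≤ ω := by
      simp only [hωdef, omegaNorm]; linarith
    have h5 : ∑' k, 2 * R ^ 2 * α k ^ 2 = 2 * R ^ 2 * ∑' k, α k ^ 2 := tsum_mul_left
    have h6 : ω * ∑' k, α k ≤ ω * ω := mul_le_mul_of_nonneg_left h4 hω0
    calc ‖H‖ ≤ ∑' k, 2 * R ^ 2 * α k ^ 2 := h1.trans h2
      _ = 2 * R ^ 2 * ∑' k, α k ^ 2 := h5
      _ ≤ 2 * R ^ 2 * (ω * ω) := by
          apply mul_le_mul_of_nonneg_left (h3.trans h6) (by positivity)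
      _ = 2 * R ^ 2 * ω ^ 2 := by ring
  -- summability of the ℂ-valued α k * T1
  have hαC : Summable (fun k => ((α k : ℂ))) := Complex.summable_ofReal.mpr hsum
  have hsum1 : Summable (fun k => (α k : ℂ) * T1) := hαC.mul_right T1
  have hGsum : Summable (fun k => (α k : ℂ) * T1 + Gtail k) := hsum1.add hHs
  -- the product formula
  have hprod : (∏' k, detFactor (α k) ξ)
      = Complex.exp (-∑' k, ((α k : ℂ) * T1 + Gtail k)) := by
    have hcongr : ∀ k, detFactor (α k) ξ
        = Complex.exp (-((α k : ℂ) * T1 + Gtail k)) := by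
      intro k
      rw [detFactor_eq]
      congr 1
      rw [show (∑' m : ℕ, ((-1 : ℂ) ^ m / (m + 1)) *
          (((α k : ℝ) : ℂ) ^ (m + 1) * traceM (matPow (matPow ξ 2) (m + 1))))
          = ∑' m : ℕ, Gterm ξ (α k) m from rfl]
      rw [Gsplit hξ (hα k) (hk k)]
    have hHasProd : HasProd (fun k => Complex.exp (-((α k : ℂ) * T1 + Gtail k)))
        (Complex.exp (-∑' k, ((α k : ℂ) * T1 + Gtail k))) := by
      have := (hGsum.hasSum.neg).cexp
      simpa [Function.comp_def, tsum_neg] using this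
    rw [tprod_congr hcongr]
    exact hHasProd.tprod_eq
  -- the sum computation
  have hsums : ∑' k, ((α k : ℂ) * T1 + Gtail k) = ((∑' k, α k : ℝ) : ℂ) * T1 + H := by
    rw [Summable.tsum_add hsum1 hHs, tsum_mul_right, Complex.ofReal_tsum]
  refine ⟨H, ?_, hHnorm, ?_, by nlinarith⟩
  · rw [sphFun, hprod, ← Complex.exp_add, hsums]
    congr 1
    simp only [hωdef, omegaNorm, Complex.ofReal_add]
    ring
  · have h1 : ‖-(ω : ℂ) * T1 - H‖ ≤ ω * R + 2 * R ^ 2 * ω ^ 2 := by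
      calc ‖-(ω : ℂ) * T1 - H‖ ≤ ‖-(ω : ℂ) * T1‖ + ‖H‖ := norm_sub_le _ _
        _ ≤ ω * R + 2 * R ^ 2 * ω ^ 2 := by
            apply add_le_add _ hHnorm
            rw [norm_mul, norm_neg, Complex.norm_real, Real.norm_of_nonneg hω0]
            exact mul_le_mul_of_nonneg_left hT1R hω0
    have h2Rω : 2 * R * ω ≤ 1 := by nlinarith
    have h3 : 2 * R ^ 2 * ω ^ 2 ≤ R * ω := by nlinarith [mul_nonneg hR hω0]
    linarith

/-- Writing φ_ω(ξ) = 1 − ‖ω‖ tr ξ² + R(ω, ξ): for fixed ξ, R(ω,ξ)/‖ω‖ → 0 as ‖ω‖ → 0;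
    and for every ρ > 0 there are C > 0 and ε > 0 such that ‖ω‖ ≤ ε and ‖ξ‖_HS ≤ ρ
    imply |1 − φ_ω(ξ)| ≤ C‖ω‖. -/
theorem sphFun_first_order_expansion :
    (∀ ξ : ℕ → ℕ → ℂ, IsHS ξ → ∀ ε > (0 : ℝ), ∃ δ > (0 : ℝ),
      ∀ (α : ℕ → ℝ) (γ : ℝ), (∀ k, 0 ≤ α k) → Summable α → 0 ≤ γ →
        0 < omegaNorm α γ → omegaNorm α γ ≤ δ →
          ‖remR α γ ξ‖ ≤ ε * omegaNorm α γ) ∧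
    (∀ ρ > (0 : ℝ), ∃ C > (0 : ℝ), ∃ ε > (0 : ℝ),
      ∀ (α : ℕ → ℝ) (γ : ℝ), (∀ k, 0 ≤ α k) → Summable α → 0 ≤ γ →
        omegaNorm α γ ≤ ε →
        ∀ ξ : ℕ → ℕ → ℂ, IsHS ξ → hsNorm ξ ≤ ρ →
          ‖1 - sphFun α γ ξ‖ ≤ C * omegaNorm α γ) := by
  constructor
  · -- part 1
    intro ξ hξ ε hε
    set R := Sval ξ with hRdef
    have hR : 0 ≤ R := Sval_nonneg ξ
    refine ⟨min (1 / (2 * (R + 1))) (ε / (6 * R ^ 2 + 1)), lt_min (by positivity) (by positivity), ?_⟩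
    intro α γ hα hsum hγ hωpos hωδ
    set ω := omegaNorm α γ with hωdef
    have hω0 : 0 ≤ ω := le_of_lt hωpos
    have hω1 : ω ≤ 1 / (2 * (R + 1)) := hωδ.trans (min_le_left _ _)
    have hω2 : ω ≤ ε / (6 * R ^ 2 + 1) := hωδ.trans (min_le_right _ _)
    obtain ⟨H, hsph, hHnorm, hznorm, h2Rω⟩ := main_est hξ α γ hα hsum hγ hω1
    set T1 := traceM (matPow ξ 2) with hT1
    set z := -(ω : ℂ) * T1 - H with hz
    have hz1 : ‖z‖ ≤ 1 := hznorm.trans h2Rω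
    have habs : ‖Complex.exp z - 1 - z‖ ≤ ‖z‖ ^ 2 := by
      have := Complex.norm_exp_sub_one_sub_id_le (x := z) hz1
      simpa using this
    have hrem : remR α γ ξ = (Complex.exp z - 1 - z) - H := by
      rw [remR, hsph, hz]
      ring
    have hznn : ‖z‖ ^ 2 ≤ (2 * R * ω) ^ 2 := by
      apply pow_le_pow_left₀ (norm_nonneg _) hznorm
    have      hfin : ‖remR α γ ξ‖ ≤ 6 * R ^ 2 * ω ^ 2 := by
      rw [hrem]
      calc ‖Complex.exp z - 1 - z - H‖ ≤ ‖Complex.exp z - 1 - z‖ + ‖H‖ := norm_sub_le _ _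
        _ ≤ ‖z‖ ^ 2 + 2 * R ^ 2 * ω ^ 2 := add_le_add habs hHnorm
        _ ≤ (2 * R * ω) ^ 2 + 2 * R ^ 2 * ω ^ 2 := by linarith
        _ = 6 * R ^ 2 * ω ^ 2 := by ring
    have h6 : 6 * R ^ 2 * ω ^ 2 ≤ ε * ω := by
      have h7 : 6 * R ^ 2 * ω ≤ 6 * R ^ 2 * (ε / (6 * R ^ 2 + 1)) :=
        mul_le_mul_of_nonneg_left hω2 (by positivity)
      have h8 : 6 * R ^ 2 * (ε / (6 * R ^ 2 + 1)) ≤ ε := by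
        rw [mul_div_assoc']
        rw [div_le_iff₀ (by positivity)]
        nlinarith
      nlinarith
    exact hfin.trans h6
  · -- part 2
    intro ρ hρ
    refine ⟨4 * ρ ^ 2 + 1, by positivity, 1 / (2 * (ρ ^ 2 + 1)), by positivity, ?_⟩
    intro α γ hα hsum hγ hωε ξ hξ hρξ
    set R := Sval ξ with hRdef
    have hR : 0 ≤ R := Sval_nonneg ξ
    have hRρ : R ≤ ρ ^ 2 := by
      have h1 : Real.sqrt R ≤ ρ := hρξ
      have h2 : R = Real.sqrt R ^ 2 := (Real.sq_sqrt hR).symm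
      rw [h2]
      exact pow_le_pow_left₀ (Real.sqrt_nonneg _) h1 2
    set ω := omegaNorm α γ with hωdef
    have hω0 : 0 ≤ ω := omegaNorm_nonneg hα hγ
    have hω1 : ω ≤ 1 / (2 * (R + 1)) := by
      apply hωε.trans
      apply one_div_le_one_div_of_le (by positivity)
      nlinarith
    obtain ⟨H, hsph, hHnorm, hznorm, h2Rω⟩ := main_est hξ α γ hα hsum hγ hω1
    set z := -(ω : ℂ) * traceM (matPow ξ 2) - H with hz
    have hz1 : ‖z‖ ≤ 1 := hznorm.trans h2Rω
    have habs : ‖Complex.exp z - 1‖ ≤ 2 * ‖z‖ := by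
      have := Complex.norm_exp_sub_one_le (x := z) hz1
      simpa using this
    calc ‖1 - sphFun α γ ξ‖ = ‖Complex.exp z - 1‖ := by rw [hsph]; exact norm_sub_rev _ _
      _ ≤ 2 * ‖z‖ := habs
      _ ≤ 2 * (2 * R * ω) := by linarith
      _ ≤ (4 * ρ ^ 2 + 1) * ω := by nlinarith
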